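/- Let n ≥ p ≥ 2 and m ≥ 3. Set a = p(p−1)/2, c = (n−p)p, d = p(p+1)/2 (so a + c + d = np), let D = diag(I_a, 2·I_{np−a}) and L = diag(−I_a, −2·I_c, O_d) be np×np diagonal matrices, let M be the (m−2)×(m−2) matrix with M[i,j] = 1 if |i−j| = 1 and 0 otherwise, and let A = 2·I_{m−2}⊗D + M⊗L. Then A is symmetric, its smallest eigenvalue equals 2 − 2·cos(π/(m−1)), and in particular A is positive definite; that is, vᵀ·A·v ≥ (2 − 2·cos(π/(m−1)))·‖v‖² for every v ∈ ℝ^{(m−2)np}, with equality attained for some nonzero v. -/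

import Mathlib

open Matrix Real
open scoped Kronecker

/-- The `N×N` tridiagonal Toeplitz matrix with zero diagonal and ones on the sub- and
super-diagonals. -/
def triToeplitz (N : ℕ) : Matrix (Fin N) (Fin N) ℝ :=
  fun i j => if (i : ℕ) = (j : ℕ) + 1 ∨ (j : ℕ) = (i : ℕ) + 1 then 1 else 0

/-- `D = diag(I_a, 2I_{np−a})` with `a = p(p−1)/2`. -/
def Dmat (n p : ℕ) : Matrix (Fin (n * p)) (Fin (n * p)) ℝ :=
  Matrix.diagonal (fun i => if (i : ℕ) < p * (p - 1) / 2 then (1 : ℝ) else 2)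

/-- `L = diag(−I_a, −2I_c, O_d)` with `a = p(p−1)/2`, `c = (n−p)p`, `d = p(p+1)/2`. -/
def Lmat (n p : ℕ) : Matrix (Fin (n * p)) (Fin (n * p)) ℝ :=
  Matrix.diagonal (fun i =>
    if (i : ℕ) < p * (p - 1) / 2 then (-1 : ℝ)
    else if (i : ℕ) < p * (p - 1) / 2 + (n - p) * p then -2 else 0)

open Finset

noncomputable def th (K : ℕ) : ℝ := Real.pi / (K + 2)

lemma th_pos (K : ℕ) : 0 < th K := div_pos Real.pi_pos (by positivity)

lemma sinpos (K j : ℕ) (h1 : 1 ≤ j) (h2 : j ≤ K + 1) : 0 < Real.sin (j * th K) := by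
  apply Real.sin_pos_of_pos_of_lt_pi
  · exact mul_pos (by exact_mod_cast Nat.pos_of_ne_zero (by omega)) (th_pos K)
  · have hj : (j : ℝ) < K + 2 := by exact_mod_cast Nat.lt_of_le_of_lt h2 (by omega)
    have h := mul_lt_mul_of_pos_right hj (th_pos K)
    calc (j:ℝ) * th K < (K + 2) * th K := h
      _ = Real.pi := by rw [th]; field_simp

lemma sin_top (K : ℕ) : Real.sin ((K + 2 : ℕ) * th K) = 0 := by
  have : ((K + 2 : ℕ) : ℝ) * th K = Real.pi := by rw [th]; push_cast; field_simp
  rw [this, Real.sin_pi]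

lemma recur (K j : ℕ) : Real.sin ((j + 2 : ℕ) * th K) + Real.sin ((j : ℕ) * th K)
    = 2 * Real.cos (th K) * Real.sin ((j + 1 : ℕ) * th K) := by
  have e1 : ((j + 2 : ℕ) : ℝ) * th K = ((j + 1 : ℕ) : ℝ) * th K + th K := by push_cast; ring
  have e2 : ((j : ℕ) : ℝ) * th K = ((j + 1 : ℕ) : ℝ) * th K - th K := by push_cast; ring
  rw [e1, e2, Real.sin_add, Real.sin_sub]; ring

lemma sq_expand (a b x y : ℝ) (ha : a ≠ 0) (hb : b ≠ 0) :
    (b * x - a * y) ^ 2 / (a * b) = b / a * (x * x) + a / b * (y * y) - 2 * (x * y) := by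
  field_simp; ring

lemma div_combine (a b c co x : ℝ) (ha : a ≠ 0) (h : b + c = 2 * co * a) :
    b / a * x + c / a * x = 2 * co * x := by
  have h1 : b / a * x + c / a * x = (b + c) / a * x := by ring
  rw [h1, h, mul_div_assoc, div_self ha, mul_one]

lemma ident (K : ℕ) (F : ℕ → ℝ) (hF : F (K + 1) = 0) :
    2 * Real.cos (th K) * ∑ i ∈ range (K + 1), F i * F i
      - 2 * ∑ i ∈ range (K + 1), F i * F (i + 1)
    = ∑ i ∈ range K, (Real.sin ((i + 2 : ℕ) * th K) * F i
        - Real.sin ((i + 1 : ℕ) * th K) * F (i + 1)) ^ 2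
        / (Real.sin ((i + 1 : ℕ) * th K) * Real.sin ((i + 2 : ℕ) * th K)) := by
  have hs : ∀ j, 1 ≤ j → j ≤ K + 1 → Real.sin (j * th K) ≠ 0 :=
    fun j h1 h2 => (sinpos K j h1 h2).ne'
  have hexp : ∀ i ∈ range K,
      (Real.sin ((i + 2 : ℕ) * th K) * F i - Real.sin ((i + 1 : ℕ) * th K) * F (i + 1)) ^ 2
        / (Real.sin ((i + 1 : ℕ) * th K) * Real.sin ((i + 2 : ℕ) * th K))
      = Real.sin ((i + 2 : ℕ) * th K) / Real.sin ((i + 1 : ℕ) * th K) * (F i * F i)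
        + Real.sin ((i + 1 : ℕ) * th K) / Real.sin ((i + 2 : ℕ) * th K) * (F (i + 1) * F (i + 1))
        - 2 * (F i * F (i + 1)) := by
    intro i hi
    rw [mem_range] at hi
    exact sq_expand _ _ _ _ (hs (i + 1) (by omega) (by omega)) (hs (i + 2) (by omega) (by omega))
  rw [Finset.sum_congr rfl hexp, Finset.sum_sub_distrib, Finset.sum_add_distrib]
  have e1 : ∑ i ∈ range K, Real.sin ((i + 2 : ℕ) * th K) / Real.sin ((i + 1 : ℕ) * th K) * (F i * F i)
      = ∑ i ∈ range (K + 1), Real.sin ((i + 2 : ℕ) * th K) / Real.sin ((i + 1 : ℕ) * th K) * (F i * F i) := by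
    rw [Finset.sum_range_succ, sin_top, zero_div, zero_mul, add_zero]
  have e2 : ∑ i ∈ range K, Real.sin ((i + 1 : ℕ) * th K) / Real.sin ((i + 2 : ℕ) * th K) * (F (i + 1) * F (i + 1))
      = ∑ i ∈ range (K + 1), Real.sin ((i : ℕ) * th K) / Real.sin ((i + 1 : ℕ) * th K) * (F i * F i) := by
    rw [Finset.sum_range_succ' (fun i => Real.sin ((i : ℕ) * th K) / Real.sin ((i + 1 : ℕ) * th K) * (F i * F i)) K]
    have : Real.sin ((0 : ℕ) * th K) = 0 := by norm_num
    rw [this, zero_div, zero_mul, add_zero]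
  have e3 : ∑ i ∈ range K, 2 * (F i * F (i + 1)) = ∑ i ∈ range (K + 1), 2 * (F i * F (i + 1)) := by
    rw [Finset.sum_range_succ, hF, mul_zero, mul_zero, add_zero]
  rw [e1, e2, e3, ← Finset.sum_add_distrib, Finset.mul_sum, Finset.mul_sum]
  congr 1
  refine Finset.sum_congr rfl fun i hi => ?_
  rw [mem_range] at hi
  exact (div_combine _ _ _ _ _ (hs (i + 1) (by omega) (by omega)) (recur K i)).symm

/-- extension of a `Fin N` vector by zero -/
noncomputable def zext (N : ℕ) (x : Fin N → ℝ) : ℕ → ℝ :=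
  fun i => if h : i < N then x ⟨i, h⟩ else 0

lemma ext_lt (N : ℕ) (x : Fin N → ℝ) (i : Fin N) : zext N x i = x i := by
  simp [zext, i.isLt]

lemma ext_ge (N : ℕ) (x : Fin N → ℝ) (i : ℕ) (h : N ≤ i) : zext N x i = 0 := by
  simp [zext, Nat.not_lt.2 h]

lemma dot_self_eq (N : ℕ) (x : Fin N → ℝ) :
    x ⬝ᵥ x = ∑ i ∈ range N, zext N x i * zext N x i := by
  rw [dotProduct, ← Fin.sum_univ_eq_sum_range (fun i => zext N x i * zext N x i) N]
  exact Finset.sum_congr rfl fun i _ => by rw [ext_lt]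

lemma dot_toeplitz (N : ℕ) (x : Fin N → ℝ) :
    x ⬝ᵥ (triToeplitz N).mulVec x = 2 * ∑ i ∈ range N, zext N x i * zext N x (i + 1) := by
  have h1 : x ⬝ᵥ (triToeplitz N).mulVec x
      = ∑ i ∈ range N, ∑ j ∈ range N,
          (if i = j + 1 ∨ j = i + 1 then zext N x i * zext N x j else 0) := by
    rw [dotProduct]
    rw [← Fin.sum_univ_eq_sum_range (fun i => ∑ j ∈ range N,
      (if i = j + 1 ∨ j = i + 1 then zext N x i * zext N x j else 0)) N]
    refine Finset.sum_congr rfl fun i _ => ?_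
    rw [mulVec, dotProduct, Finset.mul_sum]
    rw [← Fin.sum_univ_eq_sum_range (fun j =>
      (if (i : ℕ) = j + 1 ∨ j = (i : ℕ) + 1 then zext N x i * zext N x j else 0)) N]
    refine Finset.sum_congr rfl fun j _ => ?_
    rw [ext_lt, ext_lt, triToeplitz]
    by_cases h : (i : ℕ) = (j : ℕ) + 1 ∨ (j : ℕ) = (i : ℕ) + 1 <;> simp [h]
  have h2 : ∀ i j : ℕ, (if i = j + 1 ∨ j = i + 1 then zext N x i * zext N x j else 0)
      = (if j = i + 1 then zext N x i * zext N x j else 0)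
        + (if i = j + 1 then zext N x i * zext N x j else 0) := by
    intro i j
    by_cases hA : j = i + 1
    · by_cases hB : i = j + 1
      · exact absurd hB (by omega)
      · simp [hA, hB]
        intro h; omega
    · by_cases hB : i = j + 1
      · simp [hA, hB]
        intro h; omega
      · simp [hA, hB]
  simp only [h1, h2, Finset.sum_add_distrib]
  have h3 : ∑ i ∈ range N, ∑ j ∈ range N, (if j = i + 1 then zext N x i * zext N x j else 0)
      = ∑ i ∈ range N, zext N x i * zext N x (i + 1) := by
    refine Finset.sum_congr rfl fun i _ => ?_
    rw [Finset.sum_ite_eq' (range N) (i + 1) (fun j => zext N x i * zext N x j)]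
    by_cases h : i + 1 ∈ range N
    · simp [h]
    · rw [if_neg h, ext_ge N x (i + 1) (by simpa using h), mul_zero]
  have h4 : ∑ i ∈ range N, ∑ j ∈ range N, (if i = j + 1 then zext N x i * zext N x j else 0)
      = ∑ i ∈ range N, zext N x i * zext N x (i + 1) := by
    rw [Finset.sum_comm]
    refine Finset.sum_congr rfl fun j _ => ?_
    rw [Finset.sum_ite_eq' (range N) (j + 1) (fun i => zext N x i * zext N x j)]
    by_cases h : j + 1 ∈ range N
    · simp [h]; ring
    · rw [if_neg h]; simp [ext_ge N x (j + 1) (by simpa using h)]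
  rw [h3, h4]; ring

lemma kron_diag_quad (N P : ℕ) (M : Matrix (Fin N) (Fin N) ℝ) (l : Fin P → ℝ)
    (v : Fin N × Fin P → ℝ) :
    v ⬝ᵥ ((M ⊗ₖ Matrix.diagonal l).mulVec v)
      = ∑ k : Fin P, l k * ((fun i => v (i, k)) ⬝ᵥ M.mulVec (fun i => v (i, k))) := by
  simp only [dotProduct, mulVec, kroneckerMap_apply, Matrix.diagonal_apply,
    Fintype.sum_prod_type, mul_ite, mul_zero, ite_mul, zero_mul,
    Finset.sum_ite_eq, Finset.mem_univ, if_true, Finset.mul_sum]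
  rw [Finset.sum_comm]
  refine Finset.sum_congr rfl fun k _ => Finset.sum_congr rfl fun i _ =>
    Finset.sum_congr rfl fun j _ => by ring

lemma dot_prod_split (N P : ℕ) (v : Fin N × Fin P → ℝ) :
    v ⬝ᵥ v = ∑ k : Fin P, ((fun i => v (i, k)) ⬝ᵥ fun i => v (i, k)) := by
  simp only [dotProduct, Fintype.sum_prod_type]
  rw [Finset.sum_comm]

lemma triToeplitz_isSymm (N : ℕ) : (triToeplitz N).IsSymm := by
  ext i j
  simp only [Matrix.transpose_apply, triToeplitz]
  exact if_congr or_comm rfl rfl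

/-- The matrix `A = 2·I_{m−2}⊗D + M⊗L` is symmetric, positive definite, and its smallest
eigenvalue equals `2 − 2cos(π/(m−1))`. -/
theorem stmt13 (n p m : ℕ) (hp : 2 ≤ p) (hnp : p ≤ n) (hm : 3 ≤ m) :
    ((2 : ℝ) • ((1 : Matrix (Fin (m - 2)) (Fin (m - 2)) ℝ) ⊗ₖ Dmat n p)
        + triToeplitz (m - 2) ⊗ₖ Lmat n p).IsSymm ∧
    ((2 : ℝ) • ((1 : Matrix (Fin (m - 2)) (Fin (m - 2)) ℝ) ⊗ₖ Dmat n p)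
        + triToeplitz (m - 2) ⊗ₖ Lmat n p).PosDef ∧
    (∀ v : Fin (m - 2) × Fin (n * p) → ℝ,
      (2 - 2 * Real.cos (Real.pi / (m - 1))) * (v ⬝ᵥ v) ≤
        v ⬝ᵥ ((2 : ℝ) • ((1 : Matrix (Fin (m - 2)) (Fin (m - 2)) ℝ) ⊗ₖ Dmat n p)
            + triToeplitz (m - 2) ⊗ₖ Lmat n p).mulVec v) ∧
    (∃ v : Fin (m - 2) × Fin (n * p) → ℝ, v ≠ 0 ∧
      v ⬝ᵥ ((2 : ℝ) • ((1 : Matrix (Fin (m - 2)) (Fin (m - 2)) ℝ) ⊗ₖ Dmat n p)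
            + triToeplitz (m - 2) ⊗ₖ Lmat n p).mulVec v
        = (2 - 2 * Real.cos (Real.pi / (m - 1))) * (v ⬝ᵥ v)) := by
  obtain ⟨K, rfl⟩ : ∃ K, m = K + 3 := ⟨m - 3, by omega⟩
  have hcast : Real.pi / ((K + 3 : ℕ) - 1 : ℝ) = th K := by
    rw [th]; push_cast; ring_nf
  rw [hcast]
  set N := K + 1 with hN
  set P := n * p with hPdef
  set a := p * (p - 1) / 2 with ha
  set c := (n - p) * p with hc
  set θ := th K with hθ
  -- trig facts
  have hθpos : 0 < θ := th_pos K
  have hθle : θ ≤ Real.pi / 2 := by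
    rw [hθ, th]
    apply div_le_div_of_nonneg_left Real.pi_pos.le (by norm_num)
    push_cast; norm_num
  have hcos0 : 0 ≤ Real.cos θ :=
    Real.cos_nonneg_of_mem_Icc ⟨by linarith, hθle⟩
  have hcos1 : Real.cos θ ≤ 1 := Real.cos_le_one θ
  have hcoslt : Real.cos θ < 1 := by
    have := Real.cos_lt_cos_of_nonneg_of_le_pi (le_refl 0) (by linarith [Real.pi_pos]) hθpos
    simpa using this
  set lam := 2 - 2 * Real.cos θ with hlam
  have hlampos : 0 < lam := by rw [hlam]; linarith
  -- the key spectral inequality for the Toeplitz matrix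
  have keyk : ∀ x : Fin N → ℝ,
      x ⬝ᵥ (triToeplitz N).mulVec x ≤ 2 * Real.cos θ * (x ⬝ᵥ x) := by
    intro x
    rw [dot_toeplitz, dot_self_eq]
    have hF : zext N x (K + 1) = 0 := ext_ge N x (K + 1) (by omega)
    have hid := ident K (zext N x) hF
    have hnn : 0 ≤ ∑ i ∈ range K, (Real.sin ((i + 2 : ℕ) * θ) * zext N x i
        - Real.sin ((i + 1 : ℕ) * θ) * zext N x (i + 1)) ^ 2
        / (Real.sin ((i + 1 : ℕ) * θ) * Real.sin ((i + 2 : ℕ) * θ)) := by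
      refine Finset.sum_nonneg fun i hi => ?_
      rw [mem_range] at hi
      exact div_nonneg (sq_nonneg _)
        (mul_pos (sinpos K (i + 1) (by omega) (by omega))
          (sinpos K (i + 2) (by omega) (by omega))).le
    rw [hN] at *
    linarith [hid, hnn]
  -- quadratic form decomposition
  have hquad : ∀ v : Fin N × Fin P → ℝ,
      v ⬝ᵥ ((2 : ℝ) • ((1 : Matrix (Fin N) (Fin N) ℝ) ⊗ₖ Dmat n p)
          + triToeplitz N ⊗ₖ Lmat n p).mulVec v
      = ∑ k : Fin P,
          (2 * (if (k : ℕ) < a then (1:ℝ) else 2)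
              * ((fun i => v (i, k)) ⬝ᵥ fun i => v (i, k))
            + (if (k : ℕ) < a then (-1:ℝ) else if (k : ℕ) < a + c then -2 else 0)
              * ((fun i => v (i, k)) ⬝ᵥ (triToeplitz N).mulVec fun i => v (i, k))) := by
    intro v
    rw [add_mulVec, dotProduct_add, smul_mulVec, dotProduct_smul]
    rw [Dmat, Lmat, kron_diag_quad, kron_diag_quad, smul_eq_mul, Finset.mul_sum,
      ← Finset.sum_add_distrib]
    refine Finset.sum_congr rfl fun k _ => ?_
    rw [Matrix.one_mulVec]
    ring
  -- pointwise lower bound for each k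
  have hperk : ∀ (k : Fin P) (x : Fin N → ℝ),
      lam * (x ⬝ᵥ x) ≤ 2 * (if (k : ℕ) < a then (1:ℝ) else 2) * (x ⬝ᵥ x)
        + (if (k : ℕ) < a then (-1:ℝ) else if (k : ℕ) < a + c then -2 else 0)
          * (x ⬝ᵥ (triToeplitz N).mulVec x) := by
    intro k x
    have hT := keyk x
    have hS : 0 ≤ x ⬝ᵥ x := by
      rw [dot_self_eq]
      exact Finset.sum_nonneg fun i _ => mul_self_nonneg _
    by_cases h1 : (k : ℕ) < a
    · simp only [if_pos h1]
      nlinarith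
    · by_cases h2 : (k : ℕ) < a + c
      · simp only [if_neg h1, if_pos h2]
        nlinarith [mul_nonneg (sub_nonneg.2 hcos1) hS]
      · simp only [if_neg h1, if_neg h2]
        nlinarith [mul_nonneg hcos0 hS]
  -- main inequality
  have hmain : ∀ v : Fin N × Fin P → ℝ,
      lam * (v ⬝ᵥ v) ≤ v ⬝ᵥ ((2 : ℝ) • ((1 : Matrix (Fin N) (Fin N) ℝ) ⊗ₖ Dmat n p)
          + triToeplitz N ⊗ₖ Lmat n p).mulVec v := by
    intro v
    rw [hquad, dot_prod_split, Finset.mul_sum]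
    exact Finset.sum_le_sum fun k _ => hperk k _
  -- symmetry
  have hsym : ((2 : ℝ) • ((1 : Matrix (Fin N) (Fin N) ℝ) ⊗ₖ Dmat n p)
      + triToeplitz N ⊗ₖ Lmat n p).IsSymm := by
    apply Matrix.IsSymm.add
    · apply Matrix.IsSymm.smul
      rw [Matrix.IsSymm, ← Matrix.kroneckerMap_transpose]
      rw [(Matrix.isSymm_one (n := Fin N) (α := ℝ)), Dmat,
        Matrix.isSymm_diagonal]
    · rw [Matrix.IsSymm, ← Matrix.kroneckerMap_transpose]
      rw [triToeplitz_isSymm N, Lmat, Matrix.isSymm_diagonal]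
  have hpd : ((2 : ℝ) • ((1 : Matrix (Fin N) (Fin N) ℝ) ⊗ₖ Dmat n p)
      + triToeplitz N ⊗ₖ Lmat n p).PosDef := by
    refine Matrix.PosDef.of_dotProduct_mulVec_pos ?_ ?_
    · rw [Matrix.IsHermitian, Matrix.conjTranspose_eq_transpose_of_trivial]
      exact hsym
    · intro x hx
      have h1 := hmain x
      have h0 : (0:ℝ) ≤ x ⬝ᵥ x := by
        rw [dotProduct]
        exact Finset.sum_nonneg fun i _ => mul_self_nonneg _
      have h2 : 0 < x ⬝ᵥ x := by
        rcases lt_or_eq_of_le h0 with h | h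
        · exact h
        · exact absurd (dotProduct_self_eq_zero.1 h.symm) hx
      have : (0:ℝ) < lam * (x ⬝ᵥ x) := mul_pos hlampos h2
      simp only [star_trivial]
      linarith
  -- equality witness
  have hex : ∃ v : Fin N × Fin P → ℝ, v ≠ 0 ∧
      v ⬝ᵥ ((2 : ℝ) • ((1 : Matrix (Fin N) (Fin N) ℝ) ⊗ₖ Dmat n p)
          + triToeplitz N ⊗ₖ Lmat n p).mulVec v = lam * (v ⬝ᵥ v) := by
    have hP : 0 < P := Nat.mul_pos (by omega) (by omega)
    have ha1 : 1 ≤ a := by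
      rw [ha]
      have : 2 * 1 ≤ p * (p - 1) := Nat.mul_le_mul hp (by omega)
      omega
    set k0 : Fin P := ⟨0, hP⟩ with hk0
    refine ⟨fun ik => if (ik.2 : ℕ) = 0 then Real.sin (((ik.1 : ℕ) + 1 : ℕ) * θ) else 0, ?_, ?_⟩
    · intro h0
      have h1 := congrFun h0 (⟨0, by omega⟩, k0)
      have hpos : (0:ℝ) < Real.sin (th K) := by
        have := sinpos K 1 le_rfl (by omega)
        simpa using this
      rw [← hθ] at hpos
      norm_num at h1
      exact hpos.ne' h1
    · set v : Fin N × Fin P → ℝ :=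
        fun ik => if (ik.2 : ℕ) = 0 then Real.sin (((ik.1 : ℕ) + 1 : ℕ) * θ) else 0 with hv
      set x : Fin N → ℝ := fun i => Real.sin (((i : ℕ) + 1 : ℕ) * θ) with hxdef
      have hxk : ∀ k : Fin P, (fun i => v (i, k)) = if (k : ℕ) = 0 then x else 0 := by
        intro k
        by_cases h : (k : ℕ) = 0 <;> ext i <;> simp [hv, h, hxdef]
      have hne : ∀ k : Fin P, k ≠ k0 → (k : ℕ) ≠ 0 := by
        intro k hk h
        exact hk (Fin.ext (by simp [hk0, h]))
      have hk00 : (k0 : ℕ) = 0 := rfl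
      -- quadratic form via hquad: only k0 contributes
      have hS0 : ∀ k : Fin P, k ≠ k0 →
          (2 * (if (k : ℕ) < a then (1:ℝ) else 2)
              * ((fun i => v (i, k)) ⬝ᵥ fun i => v (i, k))
            + (if (k : ℕ) < a then (-1:ℝ) else if (k : ℕ) < a + c then -2 else 0)
              * ((fun i => v (i, k)) ⬝ᵥ (triToeplitz N).mulVec fun i => v (i, k))) = 0 := by
        intro k hk
        rw [hxk k, if_neg (hne k hk)]
        simp [dotProduct]
      -- the equality for x
      have hTeq : x ⬝ᵥ (triToeplitz N).mulVec x = 2 * Real.cos θ * (x ⬝ᵥ x) := by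
        rw [dot_toeplitz, dot_self_eq]
        have hF : zext N x (K + 1) = 0 := ext_ge N x (K + 1) (by omega)
        have hid := ident K (zext N x) hF
        have hz : ∑ i ∈ range K, (Real.sin ((i + 2 : ℕ) * θ) * zext N x i
            - Real.sin ((i + 1 : ℕ) * θ) * zext N x (i + 1)) ^ 2
            / (Real.sin ((i + 1 : ℕ) * θ) * Real.sin ((i + 2 : ℕ) * θ)) = 0 := by
          refine Finset.sum_eq_zero fun i hi => ?_
          rw [mem_range] at hi
          have hi1 : i < N := by omega
          have hi2 : i + 1 < N := by omega
          have e1 : zext N x i = Real.sin ((i + 1 : ℕ) * θ) := by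
            rw [zext]; rw [dif_pos hi1]
          have e2 : zext N x (i + 1) = Real.sin ((i + 2 : ℕ) * θ) := by
            rw [zext]; rw [dif_pos hi2]
          rw [e1, e2]
          rw [show Real.sin ((i + 2:ℕ) * θ) * Real.sin ((i + 1:ℕ) * θ)
            - Real.sin ((i + 1:ℕ) * θ) * Real.sin ((i + 2:ℕ) * θ) = 0 by ring]
          norm_num
        rw [hN] at *
        linarith [hid, hz]
      have hSk0 : ((fun i => v (i, k0)) ⬝ᵥ fun i => v (i, k0)) = x ⬝ᵥ x := by
        rw [hxk k0, if_pos hk00]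
      have hTk0 : ((fun i => v (i, k0)) ⬝ᵥ (triToeplitz N).mulVec fun i => v (i, k0))
          = x ⬝ᵥ (triToeplitz N).mulVec x := by
        rw [hxk k0, if_pos hk00]
      have hd0 : ((k0 : ℕ) < a) := by omega
      rw [hquad, dot_prod_split]
      rw [Finset.sum_eq_single_of_mem k0 (Finset.mem_univ k0) (fun k _ hk => hS0 k hk)]
      rw [Finset.sum_eq_single_of_mem k0 (Finset.mem_univ k0) (fun k _ hk => by
        rw [hxk k, if_neg (hne k hk)]; simp [dotProduct])]
      rw [hSk0, hTk0, hTeq, if_pos hd0, if_pos hd0]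
      ring
  exact ⟨hsym, hpd, hmain, hex⟩
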